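/- Let a > 0, S ≥ 2, n < Sa, and let Ĥ^Bayes = ψ(Sa+n+1) - ∑_i ((a+X_i)/(Sa+n))·ψ(a+X_i+1) where (X_1,...,X_S) ∼ Multinomial(n; P). Then sup over P of E_P[(Ĥ^Bayes - H(P))²] ≥ (max{0, ln((Sa+n)/(e(a+n+1)))})². -/

import Mathlib

open Finset

/-- The digamma function ψ(x) = Γ'(x)/Γ(x). -/
noncomputable def digamma (x : ℝ) : ℝ := deriv Real.Gamma x / Real.Gamma x

/-- Expectation of `g` of the counts of a Multinomial(n; p) random vector. -/
noncomputable def mExp (n S : ℕ) (p : Fin S → ℝ) (g : (Fin S → ℕ) → ℝ) : ℝ :=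
  ∑ x : Fin S → Fin (n + 1),
    if (∑ i, ((x i : ℕ))) = n then
      ((n.factorial : ℝ) / ∏ i, ((x i : ℕ).factorial : ℝ)) *
        (∏ i, p i ^ (x i : ℕ)) * g (fun i => (x i : ℕ))
    else 0

/-- The Bayes entropy estimator under the Dir(a,...,a) prior. -/
noncomputable def HBayes (n S : ℕ) (a : ℝ) (x : Fin S → ℕ) : ℝ :=
  digamma ((S : ℝ) * a + n + 1) -
    ∑ i, ((a + x i) / ((S : ℝ) * a + n)) * digamma (a + x i + 1)

private lemma diffAt_logGamma {y : ℝ} (hy : 0 < y) :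
    DifferentiableAt ℝ (Real.log ∘ Real.Gamma) y := by
  refine ((Real.differentiableAt_Gamma ?_).log (Real.Gamma_ne_zero ?_)) <;>
    exact fun m ↦ ne_of_gt (lt_of_le_of_lt (neg_nonpos.mpr m.cast_nonneg) hy)

private lemma deriv_logGamma {y : ℝ} (hy : 0 < y) :
    deriv (Real.log ∘ Real.Gamma) y = digamma y := by
  rw [Function.comp_def, deriv.log
    (Real.differentiableAt_Gamma fun m ↦ ne_of_gt (lt_of_le_of_lt (neg_nonpos.mpr m.cast_nonneg) hy))
    (Real.Gamma_ne_zero fun m ↦ ne_of_gt (lt_of_le_of_lt (neg_nonpos.mpr m.cast_nonneg) hy))]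
  rfl

private lemma slope_logGamma {x : ℝ} (hx : 0 < x) :
    slope (Real.log ∘ Real.Gamma) x (x + 1) = Real.log x := by
  rw [slope_def_field]
  simp only [Function.comp_apply, Real.Gamma_add_one hx.ne',
    Real.log_mul hx.ne' (Real.Gamma_pos_of_pos hx).ne']
  ring

lemma digamma_le_log {x : ℝ} (hx : 0 < x) : digamma x ≤ Real.log x := by
  have h := Real.convexOn_log_Gamma.deriv_le_slope (Set.mem_Ioi.mpr hx)
    (Set.mem_Ioi.mpr (by linarith : (0:ℝ) < x + 1)) (by linarith) (diffAt_logGamma hx)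
  rwa [slope_logGamma hx, deriv_logGamma hx] at h

lemma log_le_digamma {x : ℝ} (hx : 0 < x) : Real.log x ≤ digamma (x + 1) := by
  have h := Real.convexOn_log_Gamma.slope_le_deriv (Set.mem_Ioi.mpr hx)
    (Set.mem_Ioi.mpr (by linarith : (0:ℝ) < x + 1)) (by linarith)
    (diffAt_logGamma (by linarith))
  rwa [slope_logGamma hx, deriv_logGamma (by linarith : (0:ℝ) < x + 1)] at h

lemma hbayes_lb (n S : ℕ) [NeZero S] (hn : 1 ≤ n) (hS : 2 ≤ S) (a : ℝ) (ha : 0 < a) :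
    Real.log (((S : ℝ) * a + n) / (a + n + 1))
      ≤ HBayes n S a (fun i => if i = 0 then n else 0) := by
  set T : ℝ := (S : ℝ) * a + n with hTdef
  have hSR : (2 : ℝ) ≤ (S : ℝ) := by exact_mod_cast hS
  have hnR : (1 : ℝ) ≤ (n : ℝ) := by exact_mod_cast hn
  have hT : 0 < T := by nlinarith
  set A : ℝ := ((a + n) / T) * digamma (a + n + 1) with hA
  set B : ℝ := (a / T) * digamma (a + 1) with hB
  have hsum : ∑ i : Fin S, ((a + ↑(if i = 0 then n else 0)) / T) *
      digamma (a + ↑(if i = 0 then n else 0) + 1)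
      = (A - B) + (S : ℝ) * B := by
    have : ∀ i : Fin S, ((a + ↑(if i = 0 then n else 0)) / T) *
        digamma (a + ↑(if i = 0 then n else 0) + 1)
        = (if i = 0 then A - B else 0) + B := by
      intro i
      by_cases h : i = 0 <;> simp [h, hA, hB]
    rw [Finset.sum_congr rfl fun i _ => this i, Finset.sum_add_distrib,
      Finset.sum_ite_eq' univ (0 : Fin S), Finset.sum_const, card_univ, Fintype.card_fin]
    simp [nsmul_eq_mul]
  unfold HBayes
  beta_reduce
  rw [← hTdef, hsum]
  have hb1 : (0 : ℝ) < a + n + 1 := by linarith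
  have h1 : digamma (a + n + 1) ≤ Real.log (a + n + 1) := digamma_le_log hb1
  have h2 : digamma (a + 1) ≤ Real.log (a + n + 1) := by
    calc digamma (a + 1) ≤ Real.log (a + 1) := digamma_le_log (by linarith)
      _ ≤ Real.log (a + n + 1) := Real.log_le_log (by linarith) (by linarith)
  have h3 : Real.log T ≤ digamma (T + 1) := log_le_digamma hT
  have hc1 : (0 : ℝ) ≤ (a + n) / T := by positivity
  have hc2 : (0 : ℝ) ≤ a / T := by positivity
  have hA' : A ≤ ((a + n) / T) * Real.log (a + n + 1) :=
    mul_le_mul_of_nonneg_left h1 hc1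
  have hB' : B ≤ (a / T) * Real.log (a + n + 1) :=
    mul_le_mul_of_nonneg_left h2 hc2
  have hSB : ((S : ℝ) - 1) * B ≤ ((S : ℝ) - 1) * ((a / T) * Real.log (a + n + 1)) :=
    mul_le_mul_of_nonneg_left hB' (by linarith)
  have hkey : ((a + n) / T) * Real.log (a + n + 1)
      + ((S : ℝ) - 1) * ((a / T) * Real.log (a + n + 1)) = Real.log (a + n + 1) := by
    field_simp
    ring
  rw [Real.log_div hT.ne' hb1.ne']
  linarith

lemma mExp_point (n S : ℕ) [NeZero S] (g : (Fin S → ℕ) → ℝ) :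
    mExp n S (fun i => if i = 0 then (1 : ℝ) else 0) g
      = g (fun i => if i = 0 then n else 0) := by
  classical
  set x0 : Fin S → Fin (n + 1) := fun i => if i = 0 then Fin.last n else 0 with hx0
  have hvals : ∀ i : Fin S, ((x0 i : ℕ)) = if i = 0 then n else 0 := by
    intro i; by_cases h : i = 0 <;> simp [hx0, h]
  unfold mExp
  rw [Finset.sum_eq_single_of_mem x0 (mem_univ _)]
  · have hcond : (∑ i, ((x0 i : ℕ))) = n := by
      simp only [hvals]
      simp [Finset.sum_ite_eq' univ (0 : Fin S)]
    rw [if_pos hcond]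
    have hfact : (∏ i, (((x0 i : ℕ)).factorial : ℝ)) = (n.factorial : ℝ) := by
      simp only [hvals, apply_ite Nat.factorial, Nat.factorial_zero,
        apply_ite (Nat.cast : ℕ → ℝ), Nat.cast_one]
      simp [Finset.prod_ite_eq' univ (0 : Fin S)]
    have hpow : (∏ i, (if i = 0 then (1 : ℝ) else 0) ^ ((x0 i : ℕ))) = 1 := by
      apply Finset.prod_eq_one
      intro i _
      by_cases h : i = 0 <;> simp [h, hvals i]
    have harg : (fun i => ((x0 i : ℕ))) = (fun i => if i = 0 then n else 0) := by
      funext i; exact hvals i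
    rw [hfact, hpow, harg, div_self (by positivity : (n.factorial : ℝ) ≠ 0)]
    ring
  · intro x _ hx
    by_cases hc : (∑ i, ((x i : ℕ))) = n
    · rw [if_pos hc]
      have hj : ∃ j : Fin S, j ≠ 0 ∧ 0 < (x j : ℕ) := by
        by_contra h
        push_neg at h
        apply hx
        funext i
        by_cases hi : i = 0
        · subst hi
          have hz : ∀ j ∈ (univ : Finset (Fin S)), j ≠ 0 → ((x j : ℕ)) = 0 :=
            fun j _ hj0 => Nat.le_zero.mp (h j hj0)
          have : (∑ i, ((x i : ℕ))) = (x 0 : ℕ) :=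
            Finset.sum_eq_single_of_mem 0 (mem_univ _) hz
          apply Fin.ext
          simp [hx0, Fin.val_last, ← hc, this]
        · apply Fin.ext
          simp [hx0, hi, Nat.le_zero.mp (h i hi)]
      obtain ⟨j, hj0, hjpos⟩ := hj
      have : (∏ i, (if i = 0 then (1 : ℝ) else 0) ^ ((x i : ℕ))) = 0 :=
        Finset.prod_eq_zero (mem_univ j) (by rw [if_neg hj0]; exact zero_pow hjpos.ne')
      rw [this, mul_zero, zero_mul]
    · exact if_neg hc

/-- If n < Sa, then
sup_P E_P[(Ĥ^Bayes - H(P))²] ≥ (max{0, ln((Sa+n)/(e(a+n+1)))})². -/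
theorem stmt18 (n S : ℕ) (hn : 1 ≤ n) (hS : 2 ≤ S) (a : ℝ) (ha : 0 < a)
    (hna : (n : ℝ) < S * a) :
    sSup {r : ℝ | ∃ p : Fin S → ℝ, (∀ i, 0 ≤ p i) ∧ (∑ i, p i = 1) ∧
        r = mExp n S p (fun x =>
          (HBayes n S a x - (-∑ i, p i * Real.log (p i))) ^ 2)}
      ≥ (max 0 (Real.log (((S : ℝ) * a + n) / (Real.exp 1 * (a + n + 1))))) ^ 2 := by
  classical
  haveI : NeZero S := ⟨by omega⟩
  set p : Fin S → ℝ := fun i => if i = 0 then (1 : ℝ) else 0 with hp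
  have hp0 : ∀ i, 0 ≤ p i := by intro i; by_cases h : i = 0 <;> simp [hp, h]
  have hp1 : ∑ i, p i = 1 := by simp [hp, Finset.sum_ite_eq' univ (0 : Fin S)]
  have hH0 : (-∑ i, p i * Real.log (p i)) = 0 := by
    rw [neg_eq_zero]
    apply Finset.sum_eq_zero
    intro i _
    by_cases h : i = 0 <;> simp [hp, h]
  -- the set is bounded above
  set Sset := {r : ℝ | ∃ p : Fin S → ℝ, (∀ i, 0 ≤ p i) ∧ (∑ i, p i = 1) ∧
        r = mExp n S p (fun x =>
          (HBayes n S a x - (-∑ i, p i * Real.log (p i))) ^ 2)} with hSset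
  have hbdd : BddAbove Sset := by
    refine ⟨∑ x : Fin S → Fin (n + 1), (n.factorial : ℝ) *
      (2 * (HBayes n S a (fun i => (x i : ℕ))) ^ 2 + 2 * (S : ℝ) ^ 2), ?_⟩
    rintro r ⟨q, hq0, hq1, rfl⟩
    unfold mExp
    apply Finset.sum_le_sum
    intro x _
    have hqle : ∀ i, q i ≤ 1 := by
      intro i
      rw [← hq1]
      exact Finset.single_le_sum (fun j _ => hq0 j) (mem_univ i)
    split_ifs with hc
    · set H : ℝ := -∑ i, q i * Real.log (q i) with hH
      have habs : ∀ i, |q i * Real.log (q i)| ≤ 1 := by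
        intro i
        rcases eq_or_lt_of_le (hq0 i) with h | h
        · simp [← h]
        · have hlog : -Real.log (q i) ≤ 1 / q i - 1 := by
            have h2 := Real.log_le_sub_one_of_pos (show 0 < 1 / q i by positivity)
            rwa [Real.log_div one_ne_zero h.ne', Real.log_one, zero_sub] at h2
          have hlogle : Real.log (q i) ≤ 0 := Real.log_nonpos (hq0 i) (hqle i)
          rw [abs_of_nonpos (mul_nonpos_of_nonneg_of_nonpos h.le hlogle)]
          have hq : q i * (1 / q i - 1) = 1 - q i := by field_simp
          nlinarith [hqle i]
      have hHabs : |H| ≤ (S : ℝ) := by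
        rw [hH, abs_neg]
        calc |∑ i, q i * Real.log (q i)| ≤ ∑ i, |q i * Real.log (q i)| :=
              Finset.abs_sum_le_sum_abs _ _
          _ ≤ ∑ _i : Fin S, (1 : ℝ) := Finset.sum_le_sum fun i _ => habs i
          _ = (S : ℝ) := by simp
      have hHsq : H ^ 2 ≤ (S : ℝ) ^ 2 := sq_le_sq' (by linarith [(abs_le.mp hHabs).1])
        (abs_le.mp hHabs).2
      set A : ℝ := HBayes n S a (fun i => (x i : ℕ)) with hA
      have hg : (A - H) ^ 2 ≤ 2 * A ^ 2 + 2 * (S : ℝ) ^ 2 := by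
        nlinarith [sq_nonneg (A + H)]
      have h1 : (n.factorial : ℝ) / ∏ i, (((x i : ℕ)).factorial : ℝ) ≤ (n.factorial : ℝ) := by
        apply div_le_self (by positivity)
        rw [← Nat.cast_prod]
        exact_mod_cast Nat.one_le_iff_ne_zero.mpr
          (Finset.prod_pos fun i _ => Nat.factorial_pos _).ne'
      have h2 : (∏ i, q i ^ ((x i : ℕ))) ≤ 1 :=
        Finset.prod_le_one (fun i _ => pow_nonneg (hq0 i) _)
          (fun i _ => pow_le_one₀ (hq0 i) (hqle i))
      have h2' : (0 : ℝ) ≤ ∏ i, q i ^ ((x i : ℕ)) :=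
        Finset.prod_nonneg fun i _ => pow_nonneg (hq0 i) _
      have hmul : ((n.factorial : ℝ) / ∏ i, (((x i : ℕ)).factorial : ℝ)) *
          (∏ i, q i ^ ((x i : ℕ))) ≤ (n.factorial : ℝ) * 1 :=
        mul_le_mul h1 h2 h2' (by positivity)
      calc ((n.factorial : ℝ) / ∏ i, (((x i : ℕ)).factorial : ℝ)) *
            (∏ i, q i ^ ((x i : ℕ))) * (A - H) ^ 2
          ≤ ((n.factorial : ℝ) * 1) * (2 * A ^ 2 + 2 * (S : ℝ) ^ 2) :=
            mul_le_mul hmul hg (sq_nonneg _) (by positivity)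
        _ = (n.factorial : ℝ) * (2 * A ^ 2 + 2 * (S : ℝ) ^ 2) := by ring
    · positivity
  -- the chosen point is in the set
  have hmem : mExp n S p (fun x =>
      (HBayes n S a x - (-∑ i, p i * Real.log (p i))) ^ 2) ∈ Sset :=
    ⟨p, hp0, hp1, rfl⟩
  have hval : mExp n S p (fun x =>
      (HBayes n S a x - (-∑ i, p i * Real.log (p i))) ^ 2)
      = (HBayes n S a (fun i => if i = 0 then n else 0)) ^ 2 := by
    rw [mExp_point n S]
    rw [hH0, sub_zero]
  refine le_trans ?_ (le_csSup hbdd hmem)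
  rw [hval]
  set L : ℝ := Real.log (((S : ℝ) * a + n) / (Real.exp 1 * (a + n + 1))) with hL
  rcases le_or_gt L 0 with hL0 | hL0
  · rw [max_eq_left hL0]
    simpa using sq_nonneg _
  · rw [max_eq_right hL0.le]
    have hSR : (2 : ℝ) ≤ (S : ℝ) := by exact_mod_cast hS
    have hnR : (1 : ℝ) ≤ (n : ℝ) := by exact_mod_cast hn
    have hT : (0 : ℝ) < (S : ℝ) * a + n := by nlinarith
    have hb1 : (0 : ℝ) < a + n + 1 := by linarith
    have hlogeq : Real.log (((S : ℝ) * a + n) / (a + n + 1)) = L + 1 := by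
      rw [hL, Real.log_div hT.ne' hb1.ne',
        Real.log_div hT.ne' (by positivity : Real.exp 1 * (a + n + 1) ≠ 0),
        Real.log_mul (Real.exp_ne_zero 1) hb1.ne', Real.log_exp]
      ring
    have hlb := hbayes_lb n S hn hS a ha
    rw [hlogeq] at hlb
    exact pow_le_pow_left₀ hL0.le (by linarith) 2
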